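/- Let G be a bipartite graph with parts X of size m and Y of size n, every vertex of X of degree l and every vertex of Y of degree k (m ≥ n, ml = nk). Then w_X(G) ≤ l · ⌈m/l⌉, i.e., there exists a proper edge (l·⌈m/l⌉)-coloring of G interval on X. -/

import Mathlib

/-- A proper edge `t`-coloring of the bipartite graph with parts `α`, `β` and
edge set `E ⊆ α × β`: colors lie in `{1,…,t}`, all colors are used, and
adjacent edges (sharing an endpoint) get distinct colors. -/
def IsProperEdgeColoring {α β : Type*} (E : Finset (α × β)) (t : ℕ)
    (φ : α × β → ℕ) : Prop :=
  (∀ e ∈ E, φ e ∈ Finset.Icc 1 t) ∧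
  (∀ c ∈ Finset.Icc 1 t, ∃ e ∈ E, φ e = c) ∧
  (∀ e ∈ E, ∀ e' ∈ E, e ≠ e' → (e.1 = e'.1 ∨ e.2 = e'.2) → φ e ≠ φ e')

/-- The spectrum of a vertex `x` of the part `α`: the set of colors on edges
incident with `x`. -/
def spectX {α β : Type*} [DecidableEq α] (E : Finset (α × β))
    (φ : α × β → ℕ) (x : α) : Finset ℕ :=
  (E.filter fun e => e.1 = x).image φ

/-- The spectrum of a vertex `y` of the part `β`. -/
def spectY {α β : Type*} [DecidableEq β] (E : Finset (α × β))
    (φ : α × β → ℕ) (y : β) : Finset ℕ :=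
  (E.filter fun e => e.2 = y).image φ

/-- Degree of a vertex of the part `α`. -/
def degX {α β : Type*} [DecidableEq α] (E : Finset (α × β)) (x : α) : ℕ :=
  (E.filter fun e => e.1 = x).card

/-- Degree of a vertex of the part `β`. -/
def degY {α β : Type*} [DecidableEq β] (E : Finset (α × β)) (y : β) : ℕ :=
  (E.filter fun e => e.2 = y).card

/-- A finite set of naturals is an interval: nonempty and consisting of
consecutive integers. -/
def IsIntervalFinset (S : Finset ℕ) : Prop :=
  S.Nonempty ∧ ∀ a ∈ S, ∀ b ∈ S, ∀ c, a ≤ c → c ≤ b → c ∈ S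

/-- The coloring is interval in every vertex of the part `α` (every vertex
with at least one incident edge has an interval spectrum). -/
def IntervalOnX {α β : Type*} [DecidableEq α] (E : Finset (α × β))
    (φ : α × β → ℕ) : Prop :=
  ∀ x : α, (spectX E φ x).Nonempty → IsIntervalFinset (spectX E φ x)

/-- The coloring is interval in every vertex of the part `β`. -/
def IntervalOnY {α β : Type*} [DecidableEq β] (E : Finset (α × β))
    (φ : α × β → ℕ) : Prop :=
  ∀ y : β, (spectY E φ y).Nonempty → IsIntervalFinset (spectY E φ y)

/-- Maximum degree of the bipartite graph. -/
def maxDeg {α β : Type*} [Fintype α] [Fintype β] [DecidableEq α] [DecidableEq β]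
    (E : Finset (α × β)) : ℕ :=
  max (Finset.univ.sup (degX E)) (Finset.univ.sup (degY E))


lemma perm_decomp {ι : Type*} [Fintype ι] [DecidableEq ι] :
    ∀ (l : ℕ) (M : ι → ι → ℕ), (∀ r, ∑ c, M r c = l) → (∀ c, ∑ r, M r c = l) →
    ∃ σ : Fin l → Equiv.Perm ι,
      ∀ r c, M r c = (Finset.univ.filter fun i => (σ i) r = c).card := by
  intro l
  induction l with
  | zero =>
    intro M hr hc
    refine ⟨fun i => i.elim0, fun r c => ?_⟩
    have h1 : M r c = 0 := by
      have := hr r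
      have : M r c ≤ ∑ c, M r c := Finset.single_le_sum (fun _ _ => Nat.zero_le _) (Finset.mem_univ c)
      omega
    simp [h1]
  | succ l ih =>
    intro M hr hc
    -- Hall's condition
    set t : ι → Finset ι := fun r => Finset.univ.filter fun c => 0 < M r c with ht
    have hall : ∀ s : Finset ι, s.card ≤ (s.biUnion t).card := by
      intro s
      have key : (l+1) * s.card ≤ (l+1) * (s.biUnion t).card := by
        calc (l+1) * s.card = ∑ r ∈ s, (l+1) := by rw [Finset.sum_const, smul_eq_mul, mul_comm]
        _ = ∑ r ∈ s, ∑ c, M r c := by simp [hr]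
        _ = ∑ r ∈ s, ∑ c ∈ t r, M r c := by
              refine Finset.sum_congr rfl fun r _ => ?_
              refine (Finset.sum_subset (Finset.filter_subset _ _) ?_).symm
              intro c _ hcn
              simp [ht] at hcn
              omega
        _ ≤ ∑ r ∈ s, ∑ c ∈ s.biUnion t, M r c := by
              refine Finset.sum_le_sum fun r hrs => ?_
              exact Finset.sum_le_sum_of_subset (fun c hc => Finset.mem_biUnion.2 ⟨r, hrs, hc⟩)
        _ = ∑ c ∈ s.biUnion t, ∑ r ∈ s, M r c := Finset.sum_comm
        _ ≤ ∑ c ∈ s.biUnion t, ∑ r, M r c :=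
              Finset.sum_le_sum fun c _ => Finset.sum_le_sum_of_subset (Finset.subset_univ s)
        _ = (l+1) * (s.biUnion t).card := by simp [hc, mul_comm]
      exact Nat.le_of_mul_le_mul_left key (Nat.succ_pos l)
    obtain ⟨f, hfinj, hf⟩ := (Finset.all_card_le_biUnion_card_iff_exists_injective t).1 hall
    have hfpos : ∀ r, 0 < M r (f r) := by
      intro r; have := hf r; simp [ht] at this; exact this
    have hfbij : Function.Bijective f := Finite.injective_iff_bijective.mp hfinj
    set π : Equiv.Perm ι := Equiv.ofBijective f hfbij with hπ
    set M' : ι → ι → ℕ := fun r c => M r c - (if f r = c then 1 else 0) with hM'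
    have hMsplit : ∀ r c, M r c = M' r c + (if f r = c then 1 else 0) := by
      intro r c
      by_cases h : f r = c
      · have := hfpos r; rw [h] at this; simp [hM', h]; omega
      · simp [hM', h]
    have hr' : ∀ r, ∑ c, M' r c = l := by
      intro r
      have : ∑ c, M r c = (∑ c, M' r c) + ∑ c, (if f r = c then 1 else 0) := by
        rw [← Finset.sum_add_distrib]; exact Finset.sum_congr rfl fun c _ => hMsplit r c
      rw [hr r] at this
      simp only [Finset.sum_ite_eq, Finset.mem_univ, if_true] at this
      omega
    have hc' : ∀ c, ∑ r, M' r c = l := by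
      intro c
      have h1 : ∑ r, M r c = (∑ r, M' r c) + ∑ r, (if f r = c then 1 else 0) := by
        rw [← Finset.sum_add_distrib]; exact Finset.sum_congr rfl fun r _ => hMsplit r c
      have h2 : ∑ r, (if f r = c then 1 else 0) = 1 := by
        rw [Finset.sum_boole]
        obtain ⟨r0, hr0⟩ := hfbij.2 c
        have : Finset.univ.filter (fun r => f r = c) = {r0} := by
          ext r
          simp only [Finset.mem_filter, Finset.mem_univ, true_and, Finset.mem_singleton]
          exact ⟨fun h => hfinj (h.trans hr0.symm), fun h => h ▸ hr0⟩
        rw [this]; simp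
      rw [hc c] at h1; rw [h2] at h1; omega
    obtain ⟨σ', hσ'⟩ := ih M' hr' hc'
    refine ⟨Fin.cases π σ', fun r c => ?_⟩
    have hcard : ∀ (q : ℕ) (τ : Fin q → Equiv.Perm ι),
        (Finset.univ.filter fun i => (τ i) r = c).card = ∑ i : Fin q, (if (τ i) r = c then 1 else 0) := by
      intro q τ; rw [Finset.sum_boole]; simp
    rw [hcard, Fin.sum_univ_succ]
    simp only [Fin.cases_zero, Fin.cases_succ]
    show M r c = (if π r = c then 1 else 0) + ∑ i : Fin l, (if (σ' i) r = c then 1 else 0)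
    rw [← hcard l σ', ← hσ' r c]
    have h3 : ((if π r = c then 1 else 0) : ℕ) = (if f r = c then 1 else 0) := rfl
    rw [h3]
    have := hMsplit r c
    omega

/-- Auxiliary matrix for group `j`: an `l`-doubly-stochastic matrix on `α ⊕ β`. -/
def Mmat {α β : Type*} [DecidableEq α] [DecidableEq β] [Fintype α]
    (E : Finset (α × β)) (l : ℕ) (g : α → ℕ) (j : ℕ) : (α ⊕ β) → (α ⊕ β) → ℕ
  | .inl x, .inl x' => if x = x' ∧ g x ≠ j then l else 0
  | .inl x, .inr y => if g x = j ∧ (x, y) ∈ E then 1 else 0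
  | .inr y, .inl x => if g x = j ∧ (x, y) ∈ E then 1 else 0
  | .inr y, .inr y' =>
      if y = y' then l - (Finset.univ.filter fun x => g x = j ∧ (x, y) ∈ E).card else 0

section Mlem
variable {α β : Type*} [DecidableEq α] [DecidableEq β] [Fintype α] [Fintype β]
  (E : Finset (α × β)) (l : ℕ) (g : α → ℕ)

lemma Mmat_symm (j : ℕ) (a b : α ⊕ β) : Mmat E l g j a b = Mmat E l g j b a := by
  rcases a with x | y <;> rcases b with x' | y'
  · by_cases h : x = x'
    · subst h; rfl
    · have h' : ¬ x' = x := fun h' => h h'.symm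
      simp [Mmat, h, h']
  · rfl
  · rfl
  · by_cases h : y = y'
    · subst h; rfl
    · have h' : ¬ y' = y := fun h' => h h'.symm
      simp [Mmat, h, h']

lemma Mmat_row (j : ℕ)
    (hdeg : ∀ x, (Finset.univ.filter fun y => (x, y) ∈ E).card = l)
    (hdle : ∀ y, (Finset.univ.filter fun x => g x = j ∧ (x, y) ∈ E).card ≤ l)
    (r : α ⊕ β) : ∑ c, Mmat E l g j r c = l := by
  rw [Fintype.sum_sum_type]
  rcases r with x | y
  · by_cases hgj : g x = j
    · have h1 : ∑ x' : α, Mmat E l g j (.inl x) (.inl x') = 0 := by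
        simp [Mmat, hgj]
      have h2 : ∑ y : β, Mmat E l g j (.inl x) (.inr y)
          = (Finset.univ.filter fun y => (x, y) ∈ E).card := by
        simp only [Mmat, hgj, true_and]
        exact (Finset.card_filter _ _).symm
      rw [h1, h2, hdeg x, zero_add]
    · have h1 : ∑ x' : α, Mmat E l g j (.inl x) (.inl x') = l := by
        simp [Mmat, hgj, Finset.sum_ite_eq]
      have h2 : ∑ y : β, Mmat E l g j (.inl x) (.inr y) = 0 := by
        simp [Mmat, hgj]
      rw [h1, h2, add_zero]
  · have h1 : ∑ x : α, Mmat E l g j (.inr y) (.inl x)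
        = (Finset.univ.filter fun x => g x = j ∧ (x, y) ∈ E).card := by
      simp only [Mmat]
      exact (Finset.card_filter _ _).symm
    have h2 : ∑ y' : β, Mmat E l g j (.inr y) (.inr y')
        = l - (Finset.univ.filter fun x => g x = j ∧ (x, y) ∈ E).card := by
      simp [Mmat, Finset.sum_ite_eq]
    rw [h1, h2]
    have := hdle y
    omega
end Mlem


/-- For an `(l,k)`-biregular bipartite graph (`|X| = m`,
`|Y| = n`, `m ≥ n`, `ml = nk`), `w_X(G) ≤ l·⌈m/l⌉`: there exists a proper
edge `(l·⌈m/l⌉)`-coloring interval on `X`. -/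
theorem stmt9 {α β : Type*} [Fintype α] [Fintype β] [DecidableEq α] [DecidableEq β]
    (E : Finset (α × β)) (m n l k : ℕ)
    (hm : 0 < m) (hn : 0 < n) (hl : 0 < l) (hk : 0 < k)
    (hcardX : Fintype.card α = m) (hcardY : Fintype.card β = n)
    (hdX : ∀ x : α, degX E x = l) (hdY : ∀ y : β, degY E y = k)
    (hnm : n ≤ m) (hml : m * l = n * k) :
    ∃ φ : α × β → ℕ, IsProperEdgeColoring E (l * ((m + l - 1) / l)) φ ∧
      IntervalOnX E φ := by
  classical
  set p := (m + l - 1) / l with hp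
  have h1 := Nat.div_add_mod (m + l - 1) l
  rw [← hp] at h1
  have hmod1 : (m + l - 1) % l < l := Nat.mod_lt _ hl
  have hmlp : m ≤ l * p := by omega
  have hplm : l * p ≤ m + l - 1 := by omega
  set enum : α ≃ Fin m := Fintype.equivFinOfCardEq hcardX with henum
  set g : α → ℕ := fun x => (enum x : ℕ) / l with hg
  -- every group index is < p
  have hgp : ∀ x, g x < p := by
    intro x
    rw [hg]
    rw [Nat.div_lt_iff_lt_mul hl]
    have hx : (enum x : ℕ) < m := (enum x).isLt
    have : l * p = p * l := Nat.mul_comm l p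
    omega
  -- every group below p has a representative
  have hrep : ∀ j < p, ∃ x, g x = j := by
    intro j hj
    have h3 : (j + 1) * l ≤ p * l := Nat.mul_le_mul_right l hj
    have h4 : j * l < m := by
      rw [add_mul, one_mul] at h3
      have : l * p = p * l := Nat.mul_comm l p
      omega
    refine ⟨enum.symm ⟨j * l, h4⟩, ?_⟩
    rw [hg]
    simp only [Equiv.apply_symm_apply]
    exact Nat.mul_div_cancel _ hl
  -- each group has at most l elements
  have hgcard : ∀ j, (Finset.univ.filter fun x => g x = j).card ≤ l := by
    intro j
    have hle : (Finset.univ.filter fun x => g x = j).card ≤ (Finset.range l).card := by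
      refine Finset.card_le_card_of_injOn (fun x => (enum x : ℕ) % l) ?_ ?_
      · intro x _; exact Finset.mem_range.2 (Nat.mod_lt _ hl)
      · intro x hx x' hx' hxx
        rw [Finset.mem_coe, Finset.mem_filter] at hx hx'
        have e1 : (enum x : ℕ) = (enum x' : ℕ) := by
          have d1 := Nat.div_add_mod (enum x : ℕ) l
          have d2 := Nat.div_add_mod (enum x' : ℕ) l
          have hgx := hx.2
          have hgx' := hx'.2
          simp only [hg] at hgx hgx'
          simp only at hxx
          rw [hgx] at d1
          rw [hgx'] at d2
          omega
        exact enum.injective (Fin.ext e1)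
    simpa using hle
  -- degree of x counted over β
  have hdeg' : ∀ x, (Finset.univ.filter fun y => (x, y) ∈ E).card = l := by
    intro x
    have himg : E.filter (fun e => e.1 = x)
        = (Finset.univ.filter fun y => (x, y) ∈ E).image (fun y => (x, y)) := by
      ext e
      simp only [Finset.mem_filter, Finset.mem_image, Finset.mem_univ, true_and]
      constructor
      · rintro ⟨he, hx1⟩
        exact ⟨e.2, by rw [← hx1, Prod.mk.eta]; exact he, by rw [← hx1, Prod.mk.eta]⟩
      · rintro ⟨y, hy, rfl⟩; exact ⟨hy, rfl⟩
    have hinjxy : Function.Injective (fun y : β => (x, y)) := by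
      intro a b h; simpa using congrArg Prod.snd h
    have hd := hdX x
    rw [degX, himg, Finset.card_image_of_injective _ hinjxy] at hd
    exact hd
  have hdle : ∀ j y, (Finset.univ.filter fun x => g x = j ∧ (x, y) ∈ E).card ≤ l := by
    intro j y
    refine le_trans (Finset.card_le_card ?_) (hgcard j)
    intro x hx
    rw [Finset.mem_filter] at hx ⊢
    exact ⟨hx.1, hx.2.1⟩
  have hcol : ∀ j c, ∑ r, Mmat E l g j r c = l := by
    intro j c
    calc ∑ r, Mmat E l g j r c = ∑ r, Mmat E l g j c r :=
          Finset.sum_congr rfl fun r _ => Mmat_symm E l g j r c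
    _ = l := Mmat_row E l g j hdeg' (hdle j) c
  choose σ hσ using fun j : ℕ =>
    perm_decomp l (Mmat E l g j) (Mmat_row E l g j hdeg' (hdle j)) (hcol j)
  -- the within-group color index of an edge
  set I : α × β → Finset (Fin l) := fun e =>
    Finset.univ.filter fun i => σ (g e.1) i (Sum.inl e.1) = Sum.inr e.2 with hI
  have hIcard : ∀ e ∈ E, (I e).card = 1 := by
    intro e he
    have h2 := (hσ (g e.1) (Sum.inl e.1) (Sum.inr e.2)).symm
    rw [hI]
    rw [h2]
    simp [Mmat, Prod.mk.eta, he]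
  set idxf : α × β → Fin l := fun e =>
    if h : (I e).Nonempty then (I e).min' h else ⟨0, hl⟩ with hidxf
  have hidx : ∀ e ∈ E, σ (g e.1) (idxf e) (Sum.inl e.1) = Sum.inr e.2 := by
    intro e he
    have hne : (I e).Nonempty := Finset.card_pos.mp (by rw [hIcard e he]; norm_num)
    have hm' : idxf e = (I e).min' hne := dif_pos hne
    have := (I e).min'_mem hne
    rw [← hm'] at this
    rw [hI] at this
    exact (Finset.mem_filter.1 this).2
  set φ : α × β → ℕ := fun e =>
    if e ∈ E then l * g e.1 + (idxf e : ℕ) + 1 else 0 with hφdef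
  have hφ : ∀ e ∈ E, φ e = l * g e.1 + (idxf e : ℕ) + 1 := by
    intro e he; rw [hφdef]; simp [he]
  -- uniqueness: adjacent edges with equal color are equal
  have huniq : ∀ e ∈ E, ∀ e' ∈ E, φ e = φ e' → (e.1 = e'.1 ∨ e.2 = e'.2) → e = e' := by
    intro e he e' he' hco hsh
    rw [hφ e he, hφ e' he'] at hco
    have hgg : g e.1 = g e'.1 := by
      calc g e.1 = (l * g e.1 + (idxf e : ℕ)) / l := by
            rw [Nat.mul_add_div hl, Nat.div_eq_of_lt (idxf e).isLt, add_zero]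
      _ = (l * g e'.1 + (idxf e' : ℕ)) / l := by congr 1; omega
      _ = g e'.1 := by
            rw [Nat.mul_add_div hl, Nat.div_eq_of_lt (idxf e').isLt, add_zero]
    have hii : idxf e = idxf e' := by
      rw [hgg] at hco
      exact Fin.ext (by omega)
    have p1 := hidx e he
    have p2 := hidx e' he'
    rw [hgg, hii] at p1
    rcases hsh with h | h
    · rw [h] at p1
      have h22 : (Sum.inr e.2 : α ⊕ β) = Sum.inr e'.2 := p1.symm.trans p2
      injection h22 with h22
      exact Prod.ext h h22
    · rw [h] at p1
      have h11 := (σ (g e'.1) (idxf e')).injective (p1.trans p2.symm)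
      injection h11 with h11
      exact Prod.ext h11 h
  -- every color in the block of x appears at x
  have hsurjx : ∀ (x : α) (iv : ℕ), iv < l →
      ∃ e ∈ E, e.1 = x ∧ φ e = l * g x + iv + 1 := by
    intro x iv hiv
    set Ex := E.filter fun e => e.1 = x with hEx
    have hcardEx : Ex.card = l := by
      have := hdX x; rwa [degX] at this
    have hinj : Set.InjOn idxf Ex := by
      intro e he e' he' hii
      rw [Finset.mem_coe, hEx, Finset.mem_filter] at he he'
      have p1 := hidx e he.1
      have p2 := hidx e' he'.1
      rw [he.2] at p1
      rw [he'.2, ← hii] at p2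
      have h22 : (Sum.inr e.2 : α ⊕ β) = Sum.inr e'.2 := p1.symm.trans p2
      injection h22 with h22
      exact Prod.ext (he.2.trans he'.2.symm) h22
    have himgcard : (Ex.image idxf).card = l := by
      rw [Finset.card_image_of_injOn hinj, hcardEx]
    have huniv : Ex.image idxf = Finset.univ :=
      Finset.eq_univ_of_card _ (by rw [himgcard, Fintype.card_fin])
    have hmem : (⟨iv, hiv⟩ : Fin l) ∈ Ex.image idxf := huniv ▸ Finset.mem_univ _
    obtain ⟨e, heEx, hie⟩ := Finset.mem_image.1 hmem
    rw [hEx, Finset.mem_filter] at heEx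
    refine ⟨e, heEx.1, heEx.2, ?_⟩
    rw [hφ e heEx.1, heEx.2, hie]
  -- the spectrum of x is exactly its block
  have hspect : ∀ x, spectX E φ x = Finset.Icc (l * g x + 1) (l * g x + l) := by
    intro x
    ext v
    rw [spectX, Finset.mem_image, Finset.mem_Icc]
    constructor
    · rintro ⟨e, he, rfl⟩
      rw [Finset.mem_filter] at he
      rw [hφ e he.1, he.2]
      have := (idxf e).isLt
      omega
    · rintro ⟨hv1, hv2⟩
      obtain ⟨e, he, hex, hev⟩ := hsurjx x (v - (l * g x + 1)) (by omega)
      exact ⟨e, Finset.mem_filter.2 ⟨he, hex⟩, by rw [hev]; omega⟩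
  refine ⟨φ, ⟨?_, ?_, ?_⟩, ?_⟩
  · -- colors in range
    intro e he
    rw [hφ e he, Finset.mem_Icc]
    have hi := (idxf e).isLt
    have hgx := hgp e.1
    have h5 : l * (g e.1 + 1) ≤ l * p := Nat.mul_le_mul_left l hgx
    rw [Nat.mul_add, Nat.mul_one] at h5
    omega
  · -- all colors used
    intro c hc
    rw [Finset.mem_Icc] at hc
    have hj : (c - 1) / l < p := by
      rw [Nat.div_lt_iff_lt_mul hl]
      have : l * p = p * l := Nat.mul_comm l p
      omega
    obtain ⟨x, hx⟩ := hrep _ hj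
    obtain ⟨e, he, _, hev⟩ := hsurjx x ((c - 1) % l) (Nat.mod_lt _ hl)
    refine ⟨e, he, ?_⟩
    rw [hev, hx]
    have := Nat.div_add_mod (c - 1) l
    omega
  · -- proper
    intro e he e' he' hne hsh hcon
    exact hne (huniq e he e' he' hcon hsh)
  · -- interval on X
    intro x _
    rw [hspect x]
    constructor
    · exact ⟨l * g x + 1, Finset.mem_Icc.2 ⟨le_refl _, by omega⟩⟩
    · intro a ha b hb c hac hcb
      rw [Finset.mem_Icc] at *
      omega
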